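/- Let S be a decomposable and selective sum-product expression over the semiring ℝ≥0 with finite nonempty domains X i. Define M(S) ∈ ℝ≥0 recursively: M of a constant leaf c is c; M of a leaf (i, φ) is max_{t ∈ X i} φ t; M of a Product node is the product of the M-values of its children; M of a Sum node is the maximum of the M-values of its children. Then max_{x : ∀ i, X i} eval S x = M(S); that is, eval S x ≤ M(S) for all full assignments x, and there exists x with eval S x = M(S). -/

import Mathlib

open Finset

/-- A sum-product expression (SPF) over a commutative semiring `R` in variables
indexed by `ι` with domains `X i`. -/
inductive SPF (R : Type) (ι : Type) (X : ι → Type) where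
  | const : R → SPF R ι X
  | leaf : (i : ι) → (X i → R) → SPF R ι X
  | sum : List (SPF R ι X) → SPF R ι X
  | prod : List (SPF R ι X) → SPF R ι X

namespace SPF

variable {R : Type} [CommSemiring R] {ι : Type} [DecidableEq ι] {X : ι → Type}

/-- Evaluation of an SPF at a full assignment. -/
def eval : SPF R ι X → ((i : ι) → X i) → R
  | .const c, _ => c
  | .leaf i φ, x => φ (x i)
  | .sum l, x => (l.attach.map fun c => c.1.eval x).sum
  | .prod l, x => (l.attach.map fun c => c.1.eval x).prod
decreasing_by all_goals (simp_wf; have := List.sizeOf_lt_of_mem c.2; omega)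

/-- The scope of an SPF: the set of variable indices appearing in its leaves. -/
def scope : SPF R ι X → Finset ι
  | .const _ => ∅
  | .leaf i _ => {i}
  | .sum l => (l.attach.map fun c => c.1.scope).foldr (· ∪ ·) ∅
  | .prod l => (l.attach.map fun c => c.1.scope).foldr (· ∪ ·) ∅
decreasing_by all_goals (simp_wf; have := List.sizeOf_lt_of_mem c.2; omega)

/-- An SPF is decomposable iff the children of every Product node have
pairwise disjoint scopes. -/
inductive Decomposable : SPF R ι X → Prop
  | const (c : R) : Decomposable (.const c)
  | leaf (i : ι) (φ : X i → R) : Decomposable (.leaf i φ)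
  | sum {l : List (SPF R ι X)} :
      (∀ G ∈ l, Decomposable G) → Decomposable (.sum l)
  | prod {l : List (SPF R ι X)} :
      (∀ G ∈ l, Decomposable G) →
      l.Pairwise (fun G H => Disjoint G.scope H.scope) →
      Decomposable (.prod l)

/-- An SPN (an SPF over `ℝ≥0`) is selective iff for every Sum node and every
full assignment, at most one child of the node evaluates to a nonzero value. -/
inductive Selective : SPF NNReal ι X → Prop
  | const (c : NNReal) : Selective (.const c)
  | leaf (i : ι) (φ : X i → NNReal) : Selective (.leaf i φ)
  | prod {l : List (SPF NNReal ι X)} :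
      (∀ G ∈ l, Selective G) → Selective (.prod l)
  | sum {l : List (SPF NNReal ι X)} :
      (∀ G ∈ l, Selective G) →
      (∀ x : (i : ι) → X i,
        l.Pairwise (fun G H => G.eval x = 0 ∨ H.eval x = 0)) →
      Selective (.sum l)

/-- The bottom-up MPE pass `M` (summation in the max-product semiring
`(ℝ≥0, max, ×, 0, 1)`): `M` of a constant leaf `c` is `c`, of a leaf `(i, φ)`
the maximum of `φ` over `X i`, of a Product node the product of its children's
values, of a Sum node the maximum of its children's values. -/
noncomputable def M [∀ i, Fintype (X i)] : SPF NNReal ι X → NNReal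
  | .const c => c
  | .leaf _ φ => Finset.univ.sup φ
  | .prod l => (l.attach.map fun c => c.1.M).prod
  | .sum l => (l.attach.map fun c => c.1.M).foldr max 0
decreasing_by all_goals (simp_wf; have := List.sizeOf_lt_of_mem c.2; omega)

end SPF

set_option linter.unusedSectionVars false

namespace SPFAux

open SPF

variable {R : Type} [CommSemiring R] {ι : Type} [DecidableEq ι] {X : ι → Type}

theorem eval_sum (l : List (SPF R ι X)) (x : (i : ι) → X i) :
    (SPF.sum l).eval x = (l.map (eval · x)).sum := by
  rw [eval]; simp

theorem eval_prod (l : List (SPF R ι X)) (x : (i : ι) → X i) :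
    (SPF.prod l).eval x = (l.map (eval · x)).prod := by
  rw [eval]; simp

theorem scope_sum (l : List (SPF R ι X)) :
    (SPF.sum l).scope = (l.map scope).foldr (· ∪ ·) ∅ := by
  rw [scope]; simp

theorem scope_prod (l : List (SPF R ι X)) :
    (SPF.prod l).scope = (l.map scope).foldr (· ∪ ·) ∅ := by
  rw [scope]; simp

theorem M_sum [∀ i, Fintype (X i)] (l : List (SPF NNReal ι X)) :
    (SPF.sum l).M = (l.map M).foldr max 0 := by
  rw [M]; simp

theorem M_prod [∀ i, Fintype (X i)] (l : List (SPF NNReal ι X)) :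
    (SPF.prod l).M = (l.map M).prod := by
  rw [M]; simp

theorem mem_foldr_union {L : List (Finset ι)} {i : ι} :
    i ∈ L.foldr (· ∪ ·) ∅ ↔ ∃ s ∈ L, i ∈ s := by
  induction L with
  | nil => simp
  | cons a t ih => simp [ih]

/-- `eval` only depends on the values of the assignment on the scope. -/
theorem eval_congr : ∀ (S : SPF R ι X) (x y : (i : ι) → X i),
    (∀ i ∈ S.scope, x i = y i) → S.eval x = S.eval y := by
  intro S
  induction S using SPF.scope.induct with
  | case1 c => intro x y _; rw [eval, eval]
  | case2 i φ => intro x y h; simp only [eval]; rw [h i (by rw [scope]; simp)]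
  | case3 l ih =>
    intro x y h
    rw [eval_sum, eval_sum]
    congr 1
    apply List.map_congr_left
    intro G hG
    refine ih ⟨G, hG⟩ x y fun i hi => h i ?_
    rw [scope_sum]
    exact mem_foldr_union.mpr ⟨G.scope, List.mem_map.mpr ⟨G, hG, rfl⟩, hi⟩
  | case4 l ih =>
    intro x y h
    rw [eval_prod, eval_prod]
    congr 1
    apply List.map_congr_left
    intro G hG
    refine ih ⟨G, hG⟩ x y fun i hi => h i ?_
    rw [scope_prod]
    exact mem_foldr_union.mpr ⟨G.scope, List.mem_map.mpr ⟨G, hG, rfl⟩, hi⟩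

theorem sum_le_foldr_max :
    ∀ l : List NNReal, l.Pairwise (fun a b => a = 0 ∨ b = 0) →
      l.sum ≤ l.foldr max 0 := by
  intro l hl
  induction l with
  | nil => simp
  | cons a t ih =>
    rw [List.pairwise_cons] at hl
    obtain ⟨ha, ht⟩ := hl
    rw [List.sum_cons, List.foldr_cons]
    by_cases h0 : a = 0
    · subst h0
      rw [zero_add]
      exact le_trans (ih ht) (le_max_right _ _)
    · have hz : t.sum = 0 := List.sum_eq_zero fun b hb => (ha b hb).resolve_left h0
      rw [hz, add_zero]
      exact le_max_left _ _

theorem le_foldr_max {l : List NNReal} {a : NNReal} (h : a ∈ l) :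
    a ≤ l.foldr max 0 := by
  induction l with
  | nil => simp at h
  | cons b t ih =>
    rw [List.foldr_cons]
    rcases List.mem_cons.mp h with rfl | h
    · exact le_max_left _ _
    · exact le_trans (ih h) (le_max_right _ _)

theorem foldr_max_mono {α : Type} {l : List α} {f g : α → NNReal}
    (h : ∀ a ∈ l, f a ≤ g a) :
    (l.map f).foldr max 0 ≤ (l.map g).foldr max 0 := by
  induction l with
  | nil => simp
  | cons a t ih =>
    simp only [List.map_cons, List.foldr_cons]
    exact max_le_max (h a (by simp)) (ih fun b hb => h b (List.mem_cons_of_mem _ hb))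

theorem exists_foldr_max {l : List NNReal} (h : l ≠ []) :
    ∃ a ∈ l, l.foldr max 0 = a := by
  induction l with
  | nil => simp at h
  | cons a t ih =>
    rcases eq_or_ne t [] with rfl | ht
    · exact ⟨a, by simp⟩
    · obtain ⟨b, hb, hfold⟩ := ih ht
      rw [List.foldr_cons, hfold]
      rcases le_total a b with hab | hab
      · exact ⟨b, List.mem_cons_of_mem _ hb, max_eq_right hab⟩
      · exact ⟨a, by simp, max_eq_left hab⟩

theorem prod_map_mono {α : Type} {l : List α} {f g : α → NNReal}
    (h : ∀ a ∈ l, f a ≤ g a) :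
    (l.map f).prod ≤ (l.map g).prod := by
  induction l with
  | nil => simp
  | cons a t ih =>
    simp only [List.map_cons, List.prod_cons]
    exact mul_le_mul' (h a (by simp)) (ih fun b hb => h b (List.mem_cons_of_mem _ hb))

/-- Merging maximizing assignments of children with pairwise disjoint scopes. -/
theorem merge [∀ i, Fintype (X i)] [∀ i, Nonempty (X i)] :
    ∀ t : List (SPF NNReal ι X),
      (∀ G ∈ t, ∃ x : (i : ι) → X i, G.eval x = G.M) →
      t.Pairwise (fun G H => Disjoint G.scope H.scope) →
      ∃ x : (i : ι) → X i, ∀ G ∈ t, G.eval x = G.M := by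
  intro t
  induction t with
  | nil => exact fun _ _ => ⟨fun i => Classical.arbitrary _, by simp⟩
  | cons G t ih =>
    intro hex hpw
    rw [List.pairwise_cons] at hpw
    obtain ⟨hdisj, hpw⟩ := hpw
    obtain ⟨xG, hxG⟩ := hex G (by simp)
    obtain ⟨x, hx⟩ := ih (fun H hH => hex H (List.mem_cons_of_mem _ hH)) hpw
    refine ⟨fun i => if i ∈ G.scope then xG i else x i, ?_⟩
    intro H hH
    rcases List.mem_cons.mp hH with rfl | hH
    · rw [← hxG]
      exact eval_congr H _ xG fun i hi => by simp [hi]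
    · rw [← hx H hH]
      refine eval_congr H _ x fun i hi => ?_
      have : i ∉ G.scope := Finset.disjoint_right.mp (hdisj H hH) hi
      simp [this]

end SPFAux

open SPFAux in

/-- Corollary 10: the MPE value of a selective, decomposable SPN, i.e. the
maximum of its evaluation over all full assignments, equals the linear-time
bottom-up value `M(S)`: `eval S x ≤ M S` for all `x` and `eval S x = M S` for
some `x`. -/
theorem mpe_selective_decomposable_spn
    {ι : Type} [Fintype ι] [DecidableEq ι] {X : ι → Type}
    [∀ i, Fintype (X i)] [∀ i, Nonempty (X i)]
    (S : SPF NNReal ι X) (hdec : S.Decomposable) (hsel : S.Selective) :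
    (∀ x : (i : ι) → X i, S.eval x ≤ S.M) ∧
      ∃ x : (i : ι) → X i, S.eval x = S.M := by
  induction S using SPF.scope.induct with
  | case1 c =>
    rw [show (SPF.const c : SPF NNReal ι X).M = c from by rw [SPF.M]]
    refine ⟨fun x => ?_, ⟨fun i => Classical.arbitrary _, ?_⟩⟩ <;> rw [SPF.eval]
  | case2 i φ =>
    constructor
    · intro x
      simp only [SPF.eval, SPF.M]
      exact Finset.le_sup (Finset.mem_univ _)
    · obtain ⟨t, _, hsup⟩ := Finset.exists_mem_eq_sup Finset.univ Finset.univ_nonempty φ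
      refine ⟨Function.update (fun j => Classical.arbitrary (X j)) i t, ?_⟩
      simp only [SPF.eval, SPF.M, Function.update_self]
      exact hsup.symm
  | case3 l ih =>
    cases hdec with
    | sum hd =>
    cases hsel with
    | sum hs hpw =>
    have bound : ∀ G ∈ l, ∀ x : (i : ι) → X i, G.eval x ≤ G.M :=
      fun G hG => (ih ⟨G, hG⟩ (hd G hG) (hs G hG)).1
    have hb : ∀ x : (i : ι) → X i, (SPF.sum l).eval x ≤ (SPF.sum l).M := by
      intro x
      rw [eval_sum, M_sum]
      calc (l.map (SPF.eval · x)).sum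
          ≤ (l.map (SPF.eval · x)).foldr max 0 := by
            refine sum_le_foldr_max _ ?_
            exact List.Pairwise.map _ (fun a b h => h) (hpw x)
        _ ≤ (l.map SPF.M).foldr max 0 := foldr_max_mono fun G hG => bound G hG x
    refine ⟨hb, ?_⟩
    rcases eq_or_ne l [] with rfl | hl
    · refine ⟨fun i => Classical.arbitrary _, ?_⟩
      rw [eval_sum, M_sum]; simp
    · obtain ⟨m, hm, hfold⟩ := exists_foldr_max (l := l.map SPF.M) (by simpa using hl)
      obtain ⟨G, hG, hGm⟩ := List.mem_map.mp hm
      obtain ⟨x, hx⟩ := (ih ⟨G, hG⟩ (hd G hG) (hs G hG)).2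
      refine ⟨x, le_antisymm (hb x) ?_⟩
      rw [M_sum, hfold, ← hGm, ← hx, eval_sum]
      exact List.single_le_sum (fun b _ => zero_le) _
        (List.mem_map.mpr ⟨G, hG, rfl⟩)
  | case4 l ih =>
    cases hdec with
    | prod hd hdisj =>
    cases hsel with
    | prod hs =>
    constructor
    · intro x
      rw [eval_prod, M_prod]
      exact prod_map_mono fun G hG => (ih ⟨G, hG⟩ (hd G hG) (hs G hG)).1 x
    · obtain ⟨x, hx⟩ := merge l (fun G hG => (ih ⟨G, hG⟩ (hd G hG) (hs G hG)).2) hdisj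
      refine ⟨x, ?_⟩
      rw [eval_prod, M_prod]
      congr 1
      exact List.map_congr_left hx
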